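/- arXiv:2301.04736 — 3 statements merged into one kernel-verified Lean document; each statement's English description precedes it below -/
import Mathlib

section
/- For measurable sets A₁,…,A_n in a probability space (X, μ) with ∑_{j=1}^n μ(A_j) > 0, one has μ(A₁ ∪ ⋯ ∪ A_n) ≥ (∑_{j=1}^n μ(A_j))² / (∑_{j,k=1}^n μ(A_j ∩ A_k)). (Chung–Erdős inequality.) -/
open MeasureTheory
open scoped ENNReal

/-- the Chung–Erdős inequality. -/
theorem stmt2 {Ω : Type*} [MeasurableSpace Ω] (μ : Measure Ω) [IsProbabilityMeasure μ]
    (n : ℕ) (A : Fin n → Set Ω) (hA : ∀ j, MeasurableSet (A j))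
    (hpos : 0 < ∑ j, (μ (A j)).toReal) :
    (∑ j, (μ (A j)).toReal) ^ 2 / (∑ j, ∑ k, (μ (A j ∩ A k)).toReal)
      ≤ (μ (⋃ j, A j)).toReal := by
  classical
  set f : Ω → ℝ≥0∞ := fun ω => ∑ j, (A j).indicator 1 ω with hfdef
  set g : Ω → ℝ≥0∞ := (⋃ j, A j).indicator 1 with hgdef
  have hU : MeasurableSet (⋃ j, A j) := MeasurableSet.iUnion fun j => hA j
  have hfm : Measurable f :=
    Finset.measurable_sum _ fun j _ => measurable_one.indicator (hA j)
  have hgm : Measurable g := measurable_one.indicator hU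
  have hint1 : ∫⁻ ω, f ω ∂μ = ∑ j, μ (A j) := by
    rw [hfdef, lintegral_finset_sum _ fun j _ => measurable_one.indicator (hA j)]
    simp [lintegral_indicator (hA _)]
  have hsq : ∀ ω, f ω * f ω = ∑ j, ∑ k, (A j ∩ A k).indicator 1 ω := by
    intro ω
    rw [hfdef]
    simp only
    rw [Finset.sum_mul_sum]
    refine Finset.sum_congr rfl fun j _ => Finset.sum_congr rfl fun k _ => ?_
    by_cases hj : ω ∈ A j <;> by_cases hk : ω ∈ A k <;>
      simp [Set.indicator, hj, hk]
  have hint2 : ∫⁻ ω, f ω * f ω ∂μ = ∑ j, ∑ k, μ (A j ∩ A k) := by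
    calc ∫⁻ ω, f ω * f ω ∂μ = ∫⁻ ω, ∑ j, ∑ k, (A j ∩ A k).indicator 1 ω ∂μ := by
          simp_rw [hsq]
      _ = ∑ j, ∑ k, μ (A j ∩ A k) := by
          rw [lintegral_finset_sum _ fun j _ =>
            Finset.measurable_sum _ fun k _ => measurable_one.indicator ((hA j).inter (hA k))]
          refine Finset.sum_congr rfl fun j _ => ?_
          rw [lintegral_finset_sum _ fun k _ => measurable_one.indicator ((hA j).inter (hA k))]
          simp [lintegral_indicator ((hA _).inter (hA _))]
  have hfg : ∀ ω, f ω = f ω * g ω := by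
    intro ω
    by_cases h : ω ∈ ⋃ j, A j
    · simp [hgdef, Set.indicator, h]
    · have : ∀ j, ω ∉ A j := by simpa using h
      simp [hfdef, hgdef, Set.indicator, h, this]
  have CS : ∫⁻ ω, f ω ∂μ ≤
      (∫⁻ ω, f ω * f ω ∂μ) ^ (1/2 : ℝ) * (μ (⋃ j, A j)) ^ (1/2 : ℝ) := by
    have h2 : (2 : ℝ).HolderConjugate 2 := by
      constructor <;> norm_num
    have := ENNReal.lintegral_mul_le_Lp_mul_Lq μ h2 hfm.aemeasurable hgm.aemeasurable
    calc ∫⁻ ω, f ω ∂μ = ∫⁻ ω, (f * g) ω ∂μ := by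
          refine lintegral_congr fun ω => ?_
          simpa using hfg ω
      _ ≤ (∫⁻ ω, f ω ^ (2:ℝ) ∂μ) ^ (1/2 : ℝ) * (∫⁻ ω, g ω ^ (2:ℝ) ∂μ) ^ (1/2 : ℝ) := this
      _ = (∫⁻ ω, f ω * f ω ∂μ) ^ (1/2 : ℝ) * (μ (⋃ j, A j)) ^ (1/2 : ℝ) := by
          congr 1
          · congr 1
            refine lintegral_congr fun ω => ?_
            rw [show (2:ℝ) = ((2:ℕ):ℝ) by norm_num, ENNReal.rpow_natCast]
            ring
          · congr 1
            have : ∀ ω, g ω ^ (2:ℝ) = g ω := by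
              intro ω
              by_cases h : ω ∈ ⋃ j, A j <;> simp [hgdef, Set.indicator, h]
            simp_rw [this]
            rw [hgdef, lintegral_indicator hU]
            simp
  have key : (∑ j, μ (A j)) * (∑ j, μ (A j)) ≤
      (∑ j, ∑ k, μ (A j ∩ A k)) * μ (⋃ j, A j) := by
    calc (∑ j, μ (A j)) * (∑ j, μ (A j))
        ≤ ((∫⁻ ω, f ω * f ω ∂μ) ^ (1/2:ℝ) * (μ (⋃ j, A j)) ^ (1/2:ℝ)) *
          ((∫⁻ ω, f ω * f ω ∂μ) ^ (1/2:ℝ) * (μ (⋃ j, A j)) ^ (1/2:ℝ)) := by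
          rw [← hint1]; exact mul_le_mul' CS CS
      _ = (∑ j, ∑ k, μ (A j ∩ A k)) * μ (⋃ j, A j) := by
          rw [hint2, mul_mul_mul_comm, ← ENNReal.rpow_add_of_nonneg _ _ (by norm_num) (by norm_num),
            ← ENNReal.rpow_add_of_nonneg _ _ (by norm_num) (by norm_num)]
          norm_num
  -- finiteness
  have hfin1 : (∑ j, μ (A j)) ≠ ∞ :=
    (ENNReal.sum_lt_top.2 fun j _ => (measure_lt_top μ _)).ne
  have hfin2 : (∑ j, ∑ k, μ (A j ∩ A k)) ≠ ∞ :=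
    (ENNReal.sum_lt_top.2 fun j _ => ENNReal.sum_lt_top.2 fun k _ => measure_lt_top μ _).ne
  have hreal : (∑ j, (μ (A j)).toReal) * (∑ j, (μ (A j)).toReal) ≤
      (∑ j, ∑ k, (μ (A j ∩ A k)).toReal) * (μ (⋃ j, A j)).toReal := by
    have := ENNReal.toReal_mono (by
      exact ENNReal.mul_ne_top hfin2 (measure_ne_top μ _)) key
    rw [ENNReal.toReal_mul, ENNReal.toReal_mul] at this
    have e1 : (∑ j, μ (A j)).toReal = ∑ j, (μ (A j)).toReal :=
      ENNReal.toReal_sum fun j _ => measure_ne_top μ _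
    have e2 : (∑ j, ∑ k, μ (A j ∩ A k)).toReal = ∑ j, ∑ k, (μ (A j ∩ A k)).toReal := by
      rw [ENNReal.toReal_sum fun j _ => (ENNReal.sum_lt_top.2 fun k _ => measure_lt_top μ _).ne]
      exact Finset.sum_congr rfl fun j _ => ENNReal.toReal_sum fun k _ => measure_ne_top μ _
    rw [e1, e2] at this
    exact this
  have hdiag : (∑ j, (μ (A j)).toReal) ≤ ∑ j, ∑ k, (μ (A j ∩ A k)).toReal := by
    refine Finset.sum_le_sum fun j _ => ?_
    have : (μ (A j)).toReal = (μ (A j ∩ A j)).toReal := by rw [Set.inter_self]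
    rw [this]
    exact Finset.single_le_sum (f := fun k => (μ (A j ∩ A k)).toReal) (fun k _ => ENNReal.toReal_nonneg) (Finset.mem_univ j)
  have hBpos : 0 < ∑ j, ∑ k, (μ (A j ∩ A k)).toReal := lt_of_lt_of_le hpos hdiag
  rw [div_le_iff₀ hBpos]
  nlinarith [hreal]
end

section
/- Let {Rₙ} be measurable subsets of a probability space with the following properties: there exist constants c₁ ≥ 0 and, for each N, an index set I_N ⊆ ℕ with min I_N → ∞ as N → ∞, such that (i) σ_N − c₁ ≤ S_N ≤ σ_N + c₁, where S_N = ∑_{j∈I_N} μ(R_j) and σ_N = ∑_{j∈I_N} M_j for some M_j > 0; (ii) C_N := ∑_{j,k∈I_N} μ(R_j ∩ R_k) ≤ (1 + ε_N)σ_N² + c₄σ_N + c₅ with ε_N → 0 and constants c₄, c₅; and (iii) limsup_N σ_N = ∞. Then μ(limsup_N ⋃_{j∈I_N} R_j) = 1 and in particular μ(limsupₙ Rₙ) = 1 provided ⋃_{j∈I_N} R_j ⊆ ⋃_{j≥min I_N} R_j. -/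
open MeasureTheory Filter Finset
open scoped ENNReal NNReal

/-- Chung–Erdős inequality (product form, in `ℝ≥0∞`). -/
lemma chung_erdos_aux {Ω : Type*} [MeasurableSpace Ω] (μ : Measure Ω) [IsFiniteMeasure μ]
    (R : ℕ → Set Ω) (hR : ∀ n, MeasurableSet (R n)) (I : Finset ℕ) :
    (∑ j ∈ I, μ (R j)) ^ 2 ≤
      (∑ j ∈ I, ∑ k ∈ I, μ (R j ∩ R k)) * μ (⋃ j ∈ I, R j) := by
  classical
  set U : Set Ω := ⋃ j ∈ I, R j with hU
  have hUm : MeasurableSet U :=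
    MeasurableSet.biUnion I.countable_toSet fun j _ => hR j
  have hfm : Measurable (fun ω => ∑ j ∈ I, (R j).indicator (1 : Ω → ℝ≥0∞) ω) :=
    Finset.measurable_sum _ fun j _ => measurable_one.indicator (hR j)
  have hgm : Measurable (U.indicator (1 : Ω → ℝ≥0∞)) := measurable_one.indicator hUm
  have hpq : Real.HolderConjugate 2 2 := by constructor <;> norm_num
  have H := ENNReal.lintegral_mul_le_Lp_mul_Lq μ hpq hfm.aemeasurable hgm.aemeasurable
  have hfg : ((fun ω => ∑ j ∈ I, (R j).indicator (1 : Ω → ℝ≥0∞) ω) *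
      U.indicator (1 : Ω → ℝ≥0∞)) = fun ω => ∑ j ∈ I, (R j).indicator (1 : Ω → ℝ≥0∞) ω := by
    funext ω
    by_cases hω : ω ∈ U
    · simp [Set.indicator_of_mem hω]
    · have h0 : ∑ j ∈ I, (R j).indicator (1 : Ω → ℝ≥0∞) ω = 0 :=
        Finset.sum_eq_zero fun j hj =>
          Set.indicator_of_notMem (fun h => hω (Set.mem_biUnion hj h)) _
      simp [h0]
  rw [hfg] at H
  have hsq : ∀ x : ℝ≥0∞, x ^ (2:ℝ) = x * x := fun x => by
    rw [show (2:ℝ) = ((2:ℕ):ℝ) by norm_num, ENNReal.rpow_natCast, sq]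
  have hA : ∫⁻ ω, (∑ j ∈ I, (R j).indicator (1 : Ω → ℝ≥0∞) ω) ∂μ = ∑ j ∈ I, μ (R j) := by
    rw [lintegral_finset_sum _ fun j _ => measurable_one.indicator (hR j)]
    exact Finset.sum_congr rfl fun j _ => lintegral_indicator_one (hR j)
  have hB : ∫⁻ ω, (∑ j ∈ I, (R j).indicator (1 : Ω → ℝ≥0∞) ω) ^ (2:ℝ) ∂μ
      = ∑ j ∈ I, ∑ k ∈ I, μ (R j ∩ R k) := by
    have heq : ∀ ω, (∑ j ∈ I, (R j).indicator (1 : Ω → ℝ≥0∞) ω) ^ (2:ℝ)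
        = ∑ j ∈ I, ∑ k ∈ I, (R j ∩ R k).indicator (1 : Ω → ℝ≥0∞) ω := by
      intro ω
      rw [hsq]
      rw [Finset.sum_mul_sum]
      refine Finset.sum_congr rfl fun j _ => Finset.sum_congr rfl fun k _ => ?_
      rw [Set.inter_indicator_one]
      rfl
    simp only [heq]
    rw [lintegral_finset_sum _ fun j _ => Finset.measurable_sum _ fun k _ =>
      measurable_one.indicator ((hR j).inter (hR k))]
    refine Finset.sum_congr rfl fun j _ => ?_
    rw [lintegral_finset_sum _ fun k _ => measurable_one.indicator ((hR j).inter (hR k))]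
    exact Finset.sum_congr rfl fun k _ => lintegral_indicator_one ((hR j).inter (hR k))
  have hCint : ∫⁻ ω, (U.indicator (1 : Ω → ℝ≥0∞) ω) ^ (2:ℝ) ∂μ = μ U := by
    have heq : ∀ ω, (U.indicator (1 : Ω → ℝ≥0∞) ω) ^ (2:ℝ) = U.indicator (1 : Ω → ℝ≥0∞) ω := by
      intro ω
      rw [hsq]
      by_cases hω : ω ∈ U <;> simp [hω]
    simp only [heq]
    exact lintegral_indicator_one hUm
  rw [hA, hB, hCint] at H
  calc (∑ j ∈ I, μ (R j)) ^ 2 = (∑ j ∈ I, μ (R j)) * (∑ j ∈ I, μ (R j)) := sq _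
    _ ≤ ((∑ j ∈ I, ∑ k ∈ I, μ (R j ∩ R k)) ^ (1/(2:ℝ)) * μ U ^ (1/(2:ℝ))) *
        ((∑ j ∈ I, ∑ k ∈ I, μ (R j ∩ R k)) ^ (1/(2:ℝ)) * μ U ^ (1/(2:ℝ))) := mul_le_mul' H H
    _ = (∑ j ∈ I, ∑ k ∈ I, μ (R j ∩ R k)) * μ U := by
        rw [mul_mul_mul_comm, ← ENNReal.rpow_add_of_nonneg _ _ (by norm_num) (by norm_num),
          ← ENNReal.rpow_add_of_nonneg _ _ (by norm_num) (by norm_num)]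
        norm_num

/-- The core real-variable estimate: for large `s` and small `e`,
`(1-δ) * ((1+e) s² + c₄ s + c₅) ≤ (s - c₁)²` and the denominator is positive. -/
lemma real_estimate (c₁ c₄ c₅ δ s e : ℝ) (hc₁ : 0 ≤ c₁) (hδ : 0 < δ) (hδ1 : δ < 1)
    (he1 : -(δ/2) ≤ e) (he2 : e ≤ δ/2)
    (hσN : (2 / δ) * (2 * c₁ + |c₄| + |c₅| + 1) + c₁ + 1 ≤ s) :
    0 < (1 + e) * s ^ 2 + c₄ * s + c₅ ∧
      (1 - δ) * ((1 + e) * s ^ 2 + c₄ * s + c₅) ≤ (s - c₁) ^ 2 := by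
  have hc4 : c₄ ≤ |c₄| := le_abs_self c₄
  have hc4' : -|c₄| ≤ c₄ := neg_abs_le c₄
  have hc4n : 0 ≤ |c₄| := abs_nonneg c₄
  have hc5 : c₅ ≤ |c₅| := le_abs_self c₅
  have hc5' : -|c₅| ≤ c₅ := neg_abs_le c₅
  have hc5n : 0 ≤ |c₅| := abs_nonneg c₅
  have hK2 : (0:ℝ) < 2 / δ := by positivity
  have hKpos : (0:ℝ) < 2 * c₁ + |c₄| + |c₅| + 1 := by positivity
  have hKprod : 0 < (2 / δ) * (2 * c₁ + |c₄| + |c₅| + 1) := mul_pos hK2 hKpos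
  have hs1 : 1 ≤ s := by linarith
  have hsc : c₁ + 1 ≤ s := by linarith
  have hs0 : 0 < s := by linarith
  have hsK : 2 * c₁ + |c₄| + |c₅| + 1 ≤ (δ / 2) * s := by
    have h1 : (2 / δ) * (2 * c₁ + |c₄| + |c₅| + 1) ≤ s := by linarith
    have h2 := mul_le_mul_of_nonneg_left h1 (half_pos hδ).le
    have h3 : (δ / 2) * ((2 / δ) * (2 * c₁ + |c₄| + |c₅| + 1))
        = 2 * c₁ + |c₄| + |c₅| + 1 := by field_simp
    linarith
  have hsK2 : (2 * c₁ + |c₄| + |c₅| + 1) * s ≤ (δ / 2) * s ^ 2 := by nlinarith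
  constructor
  · nlinarith [mul_le_mul_of_nonneg_right he1 (sq_nonneg s), sq_nonneg s]
  · nlinarith [mul_nonneg (mul_nonneg (sub_nonneg.mpr hδ1.le)
        (by linarith : (0:ℝ) ≤ δ / 2 - e)) (sq_nonneg s),
      mul_nonneg (mul_nonneg (sub_nonneg.mpr hδ1.le)
        (by linarith : (0:ℝ) ≤ |c₄| - c₄)) hs0.le,
      mul_nonneg (sub_nonneg.mpr hδ1.le) (by linarith : (0:ℝ) ≤ |c₅| - c₅),
      mul_nonneg (mul_nonneg hδ.le hc4n) hs0.le,
      mul_nonneg hδ.le hc5n,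
      mul_nonneg (mul_nonneg hδ.le hδ.le) (sq_nonneg s)]

/-- abstract divergence Borel–Cantelli via the Chung–Erdős
inequality: quasi-independence of the blocks `I_N` with `limsup σ_N = ∞` gives a
full-measure limsup set. -/
theorem stmt11 {Ω : Type*} [MeasurableSpace Ω] (μ : Measure Ω) [IsProbabilityMeasure μ]
    (R : ℕ → Set Ω) (hR : ∀ n, MeasurableSet (R n))
    (I : ℕ → Finset ℕ)
    (hmin : ∀ K : ℕ, ∀ᶠ N in atTop, ∀ j ∈ I N, K ≤ j)
    (M : ℕ → ℝ) (hM : ∀ j, 0 < M j) (c₁ : ℝ) (hc₁ : 0 ≤ c₁)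
    (hS : ∀ N, (∑ j ∈ I N, M j) - c₁ ≤ ∑ j ∈ I N, (μ (R j)).toReal ∧
      ∑ j ∈ I N, (μ (R j)).toReal ≤ (∑ j ∈ I N, M j) + c₁)
    (ε : ℕ → ℝ) (hε : Tendsto ε atTop (nhds 0)) (c₄ c₅ : ℝ)
    (hC : ∀ N, ∑ j ∈ I N, ∑ k ∈ I N, (μ (R j ∩ R k)).toReal
      ≤ (1 + ε N) * (∑ j ∈ I N, M j) ^ 2 + c₄ * (∑ j ∈ I N, M j) + c₅)
    (hσ : ∀ K : ℝ, ∃ᶠ N in atTop, K ≤ ∑ j ∈ I N, M j) :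
    μ (Filter.limsup (fun N => ⋃ j ∈ I N, R j) Filter.atTop) = 1 ∧
      μ (Filter.limsup R Filter.atTop) = 1 := by
  classical
  set U : ℕ → Set Ω := fun N => ⋃ j ∈ I N, R j with hUdef
  have hUm : ∀ N, MeasurableSet (U N) := fun N =>
    MeasurableSet.biUnion (I N).countable_toSet fun j _ => hR j
  -- Chung–Erdős in real form
  have hCE : ∀ N, (∑ j ∈ I N, (μ (R j)).toReal) ^ 2 ≤
      (∑ j ∈ I N, ∑ k ∈ I N, (μ (R j ∩ R k)).toReal) * (μ (U N)).toReal := by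
    intro N
    have h := chung_erdos_aux μ R hR (I N)
    have hCne : (∑ j ∈ I N, ∑ k ∈ I N, μ (R j ∩ R k)) ≠ ⊤ :=
      (ENNReal.sum_lt_top.mpr fun j _ =>
        ENNReal.sum_lt_top.mpr fun k _ => measure_lt_top μ _).ne
    have hne : (∑ j ∈ I N, ∑ k ∈ I N, μ (R j ∩ R k)) * μ (U N) ≠ ⊤ :=
      ENNReal.mul_ne_top hCne (measure_ne_top μ _)
    have h2 := ENNReal.toReal_mono hne h
    rw [ENNReal.toReal_pow, ENNReal.toReal_mul,
      ENNReal.toReal_sum (fun j _ => measure_ne_top μ _),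
      ENNReal.toReal_sum (fun j _ =>
        (ENNReal.sum_lt_top.mpr fun k _ => measure_lt_top μ _).ne)] at h2
    have h3 : ∀ j ∈ I N, (∑ k ∈ I N, μ (R j ∩ R k)).toReal
        = ∑ k ∈ I N, (μ (R j ∩ R k)).toReal := fun j _ =>
      ENNReal.toReal_sum fun k _ => measure_ne_top μ _
    rwa [Finset.sum_congr rfl h3] at h2
  -- key: frequently, μ(U N) is ≥ 1 - δ
  have key : ∀ N₀ : ℕ, ∀ δ : ℝ, 0 < δ → δ < 1 →
      ∃ N, N₀ ≤ N ∧ 1 - δ ≤ (μ (U N)).toReal := by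
    intro N₀ δ hδ hδ1
    have hεev : ∀ᶠ N in atTop, |ε N| ≤ δ / 2 := by
      have := (Metric.tendsto_nhds.mp hε) (δ / 2) (half_pos hδ)
      filter_upwards [this] with N hN
      rw [Real.dist_eq, sub_zero] at hN
      exact hN.le
    obtain ⟨N, hσN, hεN, hN₀⟩ :=
      ((hσ ((2 / δ) * (2 * c₁ + |c₄| + |c₅| + 1) + c₁ + 1)).and_eventually
        (hεev.and (eventually_ge_atTop N₀))).exists
    refine ⟨N, hN₀, ?_⟩
    obtain ⟨he1, he2⟩ := abs_le.mp hεN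
    obtain ⟨hDpos, hgoal⟩ :=
      real_estimate c₁ c₄ c₅ δ (∑ j ∈ I N, M j) (ε N) hc₁ hδ hδ1 he1 he2 hσN
    have ha0 : (0:ℝ) ≤ (μ (U N)).toReal := ENNReal.toReal_nonneg
    have hsc : 0 ≤ (∑ j ∈ I N, M j) - c₁ := by
      have hK2 : (0:ℝ) < 2 / δ := by positivity
      have hKpos : (0:ℝ) < 2 * c₁ + |c₄| + |c₅| + 1 := by positivity
      nlinarith [mul_pos hK2 hKpos]
    have step1 : ((∑ j ∈ I N, M j) - c₁) ^ 2 ≤ (∑ j ∈ I N, (μ (R j)).toReal) ^ 2 := by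
      have hSl := (hS N).1
      nlinarith
    have step2 : (∑ j ∈ I N, ∑ k ∈ I N, (μ (R j ∩ R k)).toReal) * (μ (U N)).toReal
        ≤ ((1 + ε N) * (∑ j ∈ I N, M j) ^ 2 + c₄ * (∑ j ∈ I N, M j) + c₅) * (μ (U N)).toReal :=
      mul_le_mul_of_nonneg_right (hC N) ha0
    have chain : (1 - δ) * ((1 + ε N) * (∑ j ∈ I N, M j) ^ 2 + c₄ * (∑ j ∈ I N, M j) + c₅)
        ≤ (μ (U N)).toReal *
          ((1 + ε N) * (∑ j ∈ I N, M j) ^ 2 + c₄ * (∑ j ∈ I N, M j) + c₅) := by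
      calc (1 - δ) * ((1 + ε N) * (∑ j ∈ I N, M j) ^ 2 + c₄ * (∑ j ∈ I N, M j) + c₅)
          ≤ ((∑ j ∈ I N, M j) - c₁) ^ 2 := hgoal
        _ ≤ (∑ j ∈ I N, (μ (R j)).toReal) ^ 2 := step1
        _ ≤ (∑ j ∈ I N, ∑ k ∈ I N, (μ (R j ∩ R k)).toReal) * (μ (U N)).toReal := hCE N
        _ ≤ ((1 + ε N) * (∑ j ∈ I N, M j) ^ 2 + c₄ * (∑ j ∈ I N, M j) + c₅)
            * (μ (U N)).toReal := step2
        _ = (μ (U N)).toReal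
            * ((1 + ε N) * (∑ j ∈ I N, M j) ^ 2 + c₄ * (∑ j ∈ I N, M j) + c₅) := mul_comm _ _
    exact le_of_mul_le_mul_right (by linarith) hDpos
  -- every tail union has full measure
  have hT : ∀ n : ℕ, μ (⋃ m, ⋃ (_ : n ≤ m), U m) = 1 := by
    intro n
    have h1 : 1 ≤ (μ (⋃ m, ⋃ (_ : n ≤ m), U m)).toReal := by
      by_contra hcon
      push_neg at hcon
      have ht0 : 0 ≤ (μ (⋃ m, ⋃ (_ : n ≤ m), U m)).toReal := ENNReal.toReal_nonneg
      obtain ⟨N, hN, hNle⟩ := key n ((1 - (μ (⋃ m, ⋃ (_ : n ≤ m), U m)).toReal) / 2)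
        (by linarith) (by linarith)
      have hsub : U N ⊆ ⋃ m, ⋃ (_ : n ≤ m), U m :=
        Set.subset_iUnion₂ (s := fun m _ => U m) N hN
      have := ENNReal.toReal_mono (measure_ne_top μ _) (measure_mono hsub)
      linarith
    refine le_antisymm prob_le_one ?_
    rwa [← ENNReal.toReal_le_toReal ENNReal.one_ne_top (measure_ne_top μ _),
      ENNReal.toReal_one]
  have hfirst : μ (Filter.limsup U Filter.atTop) = 1 := by
    rw [limsup_eq_iInf_iSup_of_nat]
    simp only [Set.iInf_eq_iInter, Set.iSup_eq_iUnion]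
    have hTm : ∀ n : ℕ, MeasurableSet (⋃ m, ⋃ (_ : n ≤ m), U m) := fun n =>
      MeasurableSet.iUnion fun m => MeasurableSet.iUnion fun _ => hUm m
    have hcompl : μ ((⋂ n, ⋃ m, ⋃ (_ : n ≤ m), U m)ᶜ) = 0 := by
      rw [Set.compl_iInter]
      refine measure_iUnion_null fun n => ?_
      rw [measure_compl (hTm n) (measure_ne_top μ _), hT n, measure_univ, tsub_self]
    have hc := measure_compl (MeasurableSet.iInter hTm) (measure_ne_top μ _)
    rw [hcompl, measure_univ] at hc
    have hle : 1 ≤ μ (⋂ n, ⋃ m, ⋃ (_ : n ≤ m), U m) := by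
      rw [eq_comm, tsub_eq_zero_iff_le] at hc
      exact hc
    exact le_antisymm prob_le_one hle
  refine ⟨hfirst, ?_⟩
  have hsub : Filter.limsup U Filter.atTop ⊆ Filter.limsup R Filter.atTop := by
    intro x hx
    rw [mem_limsup_iff_frequently_mem] at hx ⊢
    rw [frequently_atTop] at hx ⊢
    intro K
    obtain ⟨N₀, hN₀⟩ := (hmin K).exists_forall_of_atTop
    obtain ⟨N, hN, hxU⟩ := hx N₀
    have hxU' : x ∈ ⋃ j ∈ I N, R j := hxU
    simp only [Set.mem_iUnion] at hxU'
    obtain ⟨j, hj, hxj⟩ := hxU'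
    exact ⟨j, hN₀ N hN j hj, hxj⟩
  have hmono : μ (Filter.limsup U Filter.atTop) ≤ μ (Filter.limsup R Filter.atTop) := measure_mono hsub
  rw [hfirst] at hmono
  exact le_antisymm prob_le_one hmono
end

section
/- Let (X, μ, T) be a probability measure-preserving system on X = [0,1] whose correlations decay as p for L¹ against BV, let f : [0,1] → [0,1] be L-Lipschitz and monotone, let Mₙ, M_{n+m} ∈ (0,1) with corresponding radius functions rₙ, r_{n+m} (1-Lipschitz, with μ(B(x,rₙ(x))) = Mₙ), and suppose μ is upper Ahlfors regular with exponent s and constant c. Define R_j = {x : |T^j x − f(x)| < r_j(f(x))}. Then there exist positive constants K₁, K₂, K₃ depending only on L, c, s, and sup_n p(n), such that for all n, m ∈ ℕ: μ(Rₙ ∩ R_{n+m}) ≤ Mₙ M_{n+m}(1 + K₁√p(n)) + K₂(Mₙ p(n)^{s/2} + M_{n+m}(p(n)^{s/2} + p(m))) + K₃ p(n)^s. -/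
open MeasureTheory Set

/-- The BV norm of `h` on `[0,1]`: total variation plus sup norm. -/
noncomputable def BVNorm (h : ℝ → ℝ) : ℝ :=
  (eVariationOn h (Set.Icc (0:ℝ) 1)).toReal + ⨆ x : Set.Icc (0:ℝ) 1, |h ↑x|

open ENNReal


lemma aux_mono (g : ℝ → ℝ) (hg : Monotone g) (h0 : ∀ x, 0 ≤ g x) (h1 : ∀ x, g x ≤ 1) :
    eVariationOn g (Set.Icc 0 1) ≤ 1 := by
  have h := (hg.monotoneOn (Set.Icc (0:ℝ) 1)).eVariationOn_le
    (Set.left_mem_Icc.2 zero_le_one) (Set.right_mem_Icc.2 zero_le_one)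
  rw [Set.inter_self] at h
  refine h.trans ?_
  rw [show (1:ℝ≥0∞) = ENNReal.ofReal 1 by simp]
  exact ENNReal.ofReal_le_ofReal (by linarith [h0 0, h1 1])

lemma aux_sub (f g : ℝ → ℝ) (s : Set ℝ) :
    eVariationOn (fun x => f x - g x) s ≤ eVariationOn f s + eVariationOn g s := by
  rw [eVariationOn]
  refine iSup_le ?_
  rintro ⟨n, ⟨u, hu, us⟩⟩
  have step : ∀ i : ℕ, edist (f (u (i+1)) - g (u (i+1))) (f (u i) - g (u i))
      ≤ edist (f (u (i+1))) (f (u i)) + edist (g (u (i+1))) (g (u i)) := by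
    intro i
    simpa [sub_eq_add_neg, edist_neg_neg] using
      edist_add_add_le (f (u (i+1))) (-g (u (i+1))) (f (u i)) (-g (u i))
  calc ∑ i ∈ Finset.range n, edist (f (u (i+1)) - g (u (i+1))) (f (u i) - g (u i))
      ≤ ∑ i ∈ Finset.range n, (edist (f (u (i+1))) (f (u i)) + edist (g (u (i+1))) (g (u i))) :=
        Finset.sum_le_sum fun i _ => step i
    _ = (∑ i ∈ Finset.range n, edist (f (u (i+1))) (f (u i)))
        + ∑ i ∈ Finset.range n, edist (g (u (i+1))) (g (u i)) := Finset.sum_add_distrib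
    _ ≤ eVariationOn f s + eVariationOn g s :=
        add_le_add (eVariationOn.sum_le (f := f) (n := n) hu us) (eVariationOn.sum_le (f := g) (n := n) hu us)

lemma step_mono_Ici (t : ℝ) : Monotone ((Set.Ici t).indicator fun _ => (1:ℝ)) := by
  intro a b hab
  by_cases h : t ≤ a
  · simp [Set.indicator_apply, Set.mem_Ici, h, h.trans hab]
  · simp only [Set.indicator_apply, Set.mem_Ici, h, if_false]
    positivity

lemma step_mono_Ioi (t : ℝ) : Monotone ((Set.Ioi t).indicator fun _ => (1:ℝ)) := by
  intro a b hab
  by_cases h : t < a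
  · simp [Set.indicator_apply, Set.mem_Ioi, h, h.trans_le hab]
  · simp only [Set.indicator_apply, Set.mem_Ioi, h, if_false]
    positivity

lemma step_var (S : Set ℝ) (hm : Monotone (S.indicator fun _ => (1:ℝ))) :
    eVariationOn (S.indicator fun _ => (1:ℝ)) (Set.Icc 0 1) ≤ 1 :=
  aux_mono _ hm (fun x => Set.indicator_nonneg (fun _ _ => by norm_num) x)
    (fun x => by by_cases h : x ∈ S <;> simp [h])

lemma evar_Ico (u v : ℝ) (huv : u ≤ v) :
    eVariationOn ((Set.Ico u v).indicator fun _ => (1:ℝ)) (Set.Icc 0 1) ≤ 2 := by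
  have hfun : ((Set.Ico u v).indicator fun _ => (1:ℝ)) = fun x =>
      (Set.Ici u).indicator (fun _ => (1:ℝ)) x - (Set.Ici v).indicator (fun _ => (1:ℝ)) x := by
    funext x
    by_cases h1 : u ≤ x <;> by_cases h2 : v ≤ x <;>
      simp [Set.indicator_apply, Set.mem_Ico, Set.mem_Ici, h1, h2] <;>
        first | linarith | (intro h; linarith) | skip
  rw [hfun]
  calc eVariationOn _ _ ≤ _ := aux_sub _ _ _
    _ ≤ 1 + 1 := add_le_add (step_var _ (step_mono_Ici u)) (step_var _ (step_mono_Ici v))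
    _ = 2 := one_add_one_eq_two

lemma evar_Ioo (u v : ℝ) (huv : u < v) :
    eVariationOn ((Set.Ioo u v).indicator fun _ => (1:ℝ)) (Set.Icc 0 1) ≤ 2 := by
  have hfun : ((Set.Ioo u v).indicator fun _ => (1:ℝ)) = fun x =>
      (Set.Ioi u).indicator (fun _ => (1:ℝ)) x - (Set.Ici v).indicator (fun _ => (1:ℝ)) x := by
    funext x
    by_cases h1 : u < x <;> by_cases h2 : v ≤ x <;>
      simp [Set.indicator_apply, Set.mem_Ioo, Set.mem_Ici, Set.mem_Ioi, h1, h2] <;>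
        first | linarith | (intro h; linarith) | skip
  rw [hfun]
  calc eVariationOn _ _ ≤ _ := aux_sub _ _ _
    _ ≤ 1 + 1 := add_le_add (step_var _ (step_mono_Ioi u)) (step_var _ (step_mono_Ici v))
    _ = 2 := one_add_one_eq_two

lemma BVNorm_ind_le (S : Set ℝ) (hvar : eVariationOn (S.indicator fun _ => (1:ℝ)) (Set.Icc 0 1) ≤ 2) :
    BVNorm (S.indicator fun _ => (1:ℝ)) ≤ 3 := by
  have h1 : (eVariationOn (S.indicator fun _ => (1:ℝ)) (Set.Icc 0 1)).toReal ≤ 2 := by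
    have := ENNReal.toReal_mono (by norm_num : (2:ℝ≥0∞) ≠ ⊤) hvar
    simpa using this
  have h2 : (⨆ x : Set.Icc (0:ℝ) 1, |(S.indicator fun _ => (1:ℝ)) ↑x|) ≤ 1 := by
    refine Real.iSup_le (fun x => ?_) zero_le_one
    by_cases h : (x:ℝ) ∈ S <;> simp [h]
  unfold BVNorm; linarith

lemma decay_ind (μ : Measure ℝ) [IsProbabilityMeasure μ]
    (T : ℝ → ℝ) (hT : MeasurePreserving T μ μ) (p : ℕ → ℝ) (hp : ∀ n, 0 < p n)
    (hdecay : ∀ n : ℕ, ∀ g h : ℝ → ℝ, Integrable g μ →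
      eVariationOn h (Set.Icc (0:ℝ) 1) ≠ ⊤ →
      |∫ x, g (T^[n] x) * h x ∂μ - (∫ x, g x ∂μ) * ∫ x, h x ∂μ|
        ≤ (∫ x, |g x| ∂μ) * BVNorm h * p n)
    (k : ℕ) (A B : Set ℝ) (hA : MeasurableSet A) (hB : MeasurableSet B)
    (hBvar : eVariationOn (B.indicator fun _ => (1:ℝ)) (Set.Icc 0 1) ≤ 2) :
    (μ (T^[k] ⁻¹' A ∩ B)).toReal
      ≤ (μ A).toReal * (μ B).toReal + 3 * ((μ A).toReal * p k) := by
  set g : ℝ → ℝ := A.indicator fun _ => (1:ℝ) with hg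
  set h : ℝ → ℝ := B.indicator fun _ => (1:ℝ) with hh
  have hTk : Measurable (T^[k]) := hT.measurable.iterate k
  have hint : Integrable g μ := (integrable_const (1:ℝ)).indicator hA
  have hne : eVariationOn h (Set.Icc (0:ℝ) 1) ≠ ⊤ :=
    ne_top_of_le_ne_top (by norm_num) hBvar
  have key := hdecay k g h hint hne
  have e1 : (fun x => g (T^[k] x) * h x) = (T^[k] ⁻¹' A ∩ B).indicator fun _ => (1:ℝ) := by
    funext x
    by_cases h1 : T^[k] x ∈ A <;> by_cases h2 : x ∈ B <;>
      simp [hg, hh, Set.indicator_apply, h1, h2, Set.mem_preimage]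
  have e2 : ∫ x, g (T^[k] x) * h x ∂μ = (μ (T^[k] ⁻¹' A ∩ B)).toReal := by
    rw [show ∫ x, g (T^[k] x) * h x ∂μ = ∫ x, ((T^[k] ⁻¹' A ∩ B).indicator fun _ => (1:ℝ)) x ∂μ
      from by rw [← e1]]
    exact integral_indicator_one ((hTk hA).inter hB)
  have e3 : ∫ x, g x ∂μ = (μ A).toReal := integral_indicator_one hA
  have e4 : ∫ x, h x ∂μ = (μ B).toReal := integral_indicator_one hB
  have e5 : ∫ x, |g x| ∂μ = (μ A).toReal := by
    rw [show (fun x => |g x|) = g from funext fun x => by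
      by_cases h1 : x ∈ A <;> simp [hg, Set.indicator_apply, h1]]
    exact e3
  rw [e2, e3, e4, e5] at key
  have hBV3 : BVNorm h ≤ 3 := BVNorm_ind_le B hBvar
  have h0 : (0:ℝ) ≤ (μ A).toReal := ENNReal.toReal_nonneg
  have habs := abs_le.1 key
  have : (μ A).toReal * BVNorm h * p k ≤ (μ A).toReal * 3 * p k := by
    apply mul_le_mul_of_nonneg_right _ (hp k).le
    exact mul_le_mul_of_nonneg_left hBV3 h0
  nlinarith [habs.2]


lemma mtoReal_mono (μ : Measure ℝ) [IsFiniteMeasure μ] {A B : Set ℝ} (h : A ⊆ B) :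
    (μ A).toReal ≤ (μ B).toReal :=
  ENNReal.toReal_mono (measure_ne_top μ B) (measure_mono h)

lemma mtoReal_union (μ : Measure ℝ) [IsFiniteMeasure μ] {A B C : Set ℝ} (h : A ⊆ B ∪ C) :
    (μ A).toReal ≤ (μ B).toReal + (μ C).toReal := by
  calc (μ A).toReal ≤ (μ (B ∪ C)).toReal := mtoReal_mono μ h
    _ ≤ ((μ B) + (μ C)).toReal := ENNReal.toReal_mono
        (by exact ENNReal.add_ne_top.2 ⟨measure_ne_top μ B, measure_ne_top μ C⟩) (measure_union_le B C)
    _ = (μ B).toReal + (μ C).toReal := ENNReal.toReal_add (measure_ne_top μ B) (measure_ne_top μ C)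

lemma meas_inter_Icc (μ : Measure ℝ) [IsProbabilityMeasure μ] (hX : μ (Set.Icc (0:ℝ) 1) = 1)
    (A : Set ℝ) : μ A = μ (A ∩ Set.Icc (0:ℝ) 1) := by
  have hcompl : μ (Set.Icc (0:ℝ) 1)ᶜ = 0 := by
    rw [measure_compl measurableSet_Icc (measure_ne_top μ _), hX, measure_univ, tsub_self]
  have h1 : μ (A ∩ Set.Icc (0:ℝ) 1) + μ (A \ Set.Icc (0:ℝ) 1) = μ A :=
    measure_inter_add_diff A measurableSet_Icc
  have h2 : μ (A \ Set.Icc (0:ℝ) 1) = 0 :=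
    measure_mono_null (diff_subset_compl A _) hcompl
  rw [h2, add_zero] at h1
  exact h1.symm

section
variable (μ : Measure ℝ) [IsProbabilityMeasure μ] (hX : μ (Set.Icc (0:ℝ) 1) = 1)
  (s c : ℝ) (hs : 0 < s) (hc : 0 < c)
  (hreg : ∀ x ∈ Set.Icc (0:ℝ) 1, ∀ ρ : ℝ, 0 < ρ →
    (μ (Metric.ball x ρ ∩ Set.Icc (0:ℝ) 1)).toReal ≤ c * ρ ^ s)
  (Mj : ℝ) (hMj : 0 < Mj) (rj : ℝ → ℝ)
  (hratt : ∀ x ∈ Set.Icc (0:ℝ) 1, (μ (Metric.ball x (rj x) ∩ Set.Icc (0:ℝ) 1)).toReal = Mj)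

include hX hs hc hreg hMj hratt

lemma r_pos : ∀ w ∈ Set.Icc (0:ℝ) 1, 0 < rj w := by
  intro w hw
  by_contra hcon
  push_neg at hcon
  have : Metric.ball w (rj w) = ∅ := Metric.ball_eq_empty.2 hcon
  have h0 := hratt w hw
  rw [this] at h0
  simp at h0
  exact absurd h0.symm (ne_of_gt hMj)

/-- side-piece estimate: an interval of length `e` adjacent to a point `w₀`
  (either `[w₀, w₀+e)` or `(w₀-e, w₀]`). -/
lemma side_piece (w₀ e : ℝ) (he : 0 < e) (hw₀ : w₀ ∈ Set.Icc (0:ℝ) 1)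
    (P : Set ℝ) (hP : P ⊆ Metric.ball w₀ e) :
    (μ (P ∩ Set.Icc (0:ℝ) 1)).toReal ≤ c * e ^ s
    ∧ (c * e ^ s ≤ Mj → (μ (P ∩ Set.Icc (0:ℝ) 1)).toReal ≤ Mj) := by
  constructor
  · exact le_trans (mtoReal_mono μ (inter_subset_inter_left _ hP)) (hreg w₀ hw₀ e he)
  · intro hgood
    have hrw : 0 < rj w₀ := r_pos μ hX s c hs hc hreg Mj hMj rj hratt w₀ hw₀
    have hle : e ≤ rj w₀ := by
      by_contra hcon
      push_neg at hcon
      have : (rj w₀) ^ s < e ^ s := Real.rpow_lt_rpow hrw.le hcon hs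
      have h2 := hratt w₀ hw₀ ▸ hreg w₀ hw₀ (rj w₀) hrw
      nlinarith
    calc (μ (P ∩ Set.Icc (0:ℝ) 1)).toReal
        ≤ (μ (Metric.ball w₀ (rj w₀) ∩ Set.Icc (0:ℝ) 1)).toReal :=
          mtoReal_mono μ (inter_subset_inter_left _ (hP.trans (Metric.ball_subset_ball hle)))
      _ = Mj := hratt w₀ hw₀

lemma ball_split (y : ℝ) (hy : y ∈ Set.Icc (0:ℝ) 1) (e : ℝ) (he : 0 < e) :
    Metric.ball y (rj y + e) ∩ Set.Icc (0:ℝ) 1 ⊆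
      (Metric.ball y (rj y) ∩ Set.Icc (0:ℝ) 1) ∪
      ((Set.Ico (y + rj y) (y + rj y + e) ∩ Set.Icc (0:ℝ) 1) ∪
       (Set.Ioc (y - rj y - e) (y - rj y) ∩ Set.Icc (0:ℝ) 1)) := by
  intro z hz
  obtain ⟨hz1, hz2⟩ := hz
  rw [Metric.mem_ball, Real.dist_eq] at hz1
  by_cases hin : |z - y| < rj y
  · exact Or.inl ⟨Metric.mem_ball.2 (by rw [Real.dist_eq]; exact hin), hz2⟩
  · push_neg at hin
    rcases le_or_gt y z with hzy | hzy
    · refine Or.inr (Or.inl ⟨⟨?_, ?_⟩, hz2⟩)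
      · have : |z - y| = z - y := abs_of_nonneg (by linarith)
        linarith [this ▸ hin]
      · have : |z - y| = z - y := abs_of_nonneg (by linarith)
        linarith [this ▸ hz1]
    · refine Or.inr (Or.inr ⟨⟨?_, ?_⟩, hz2⟩)
      · have : |z - y| = y - z := by rw [abs_sub_comm]; exact abs_of_nonneg (by linarith)
        linarith [this ▸ hz1]
      · have : |z - y| = y - z := by rw [abs_sub_comm]; exact abs_of_nonneg (by linarith)
        linarith [this ▸ hin]

lemma ball_upper (y : ℝ) (hy : y ∈ Set.Icc (0:ℝ) 1) (e : ℝ) (he : 0 < e) :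
    (μ (Metric.ball y (rj y + e))).toReal ≤ Mj + 2 * (c * e ^ s)
    ∧ (c * e ^ s ≤ Mj → (μ (Metric.ball y (rj y + e))).toReal ≤ 3 * Mj) := by
  have hrw : 0 < rj y := r_pos μ hX s c hs hc hreg Mj hMj rj hratt y hy
  obtain ⟨hy0, hy1⟩ := hy
  have hplus : (μ (Set.Ico (y + rj y) (y + rj y + e) ∩ Set.Icc (0:ℝ) 1)).toReal ≤ c * e ^ s
      ∧ (c * e ^ s ≤ Mj → (μ (Set.Ico (y + rj y) (y + rj y + e) ∩ Set.Icc (0:ℝ) 1)).toReal ≤ Mj) := by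
    by_cases hcase : y + rj y ≤ 1
    · refine side_piece μ hX s c hs hc hreg Mj hMj rj hratt (y + rj y) e he
        ⟨by linarith, hcase⟩ _ ?_
      intro z hz
      rw [Metric.mem_ball, Real.dist_eq]
      rw [abs_of_nonneg (by linarith [hz.1])]
      linarith [hz.2]
    · have hempty : Set.Ico (y + rj y) (y + rj y + e) ∩ Set.Icc (0:ℝ) 1 = ∅ := by
        ext z
        simp only [Set.mem_inter_iff, Set.mem_Ico, Set.mem_Icc, Set.mem_empty_iff_false, iff_false]
        rintro ⟨⟨h1, _⟩, _, h2⟩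
        linarith
      rw [hempty]
      simp only [measure_empty, ENNReal.toReal_zero]
      exact ⟨by positivity, fun _ => hMj.le⟩
  have hminus : (μ (Set.Ioc (y - rj y - e) (y - rj y) ∩ Set.Icc (0:ℝ) 1)).toReal ≤ c * e ^ s
      ∧ (c * e ^ s ≤ Mj → (μ (Set.Ioc (y - rj y - e) (y - rj y) ∩ Set.Icc (0:ℝ) 1)).toReal ≤ Mj) := by
    by_cases hcase : 0 ≤ y - rj y
    · refine side_piece μ hX s c hs hc hreg Mj hMj rj hratt (y - rj y) e he
        ⟨hcase, by linarith⟩ _ ?_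
      intro z hz
      rw [Metric.mem_ball, Real.dist_eq, abs_sub_comm]
      rw [abs_of_nonneg (by linarith [hz.2])]
      linarith [hz.1]
    · have hempty : Set.Ioc (y - rj y - e) (y - rj y) ∩ Set.Icc (0:ℝ) 1 = ∅ := by
        ext z
        simp only [Set.mem_inter_iff, Set.mem_Ioc, Set.mem_Icc, Set.mem_empty_iff_false, iff_false]
        rintro ⟨⟨_, h1⟩, h2, _⟩
        linarith
      rw [hempty]
      simp only [measure_empty, ENNReal.toReal_zero]
      exact ⟨by positivity, fun _ => hMj.le⟩
  have hmain : (μ (Metric.ball y (rj y + e))).toReal ≤ Mj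
      + ((μ (Set.Ico (y + rj y) (y + rj y + e) ∩ Set.Icc (0:ℝ) 1)).toReal
        + (μ (Set.Ioc (y - rj y - e) (y - rj y) ∩ Set.Icc (0:ℝ) 1)).toReal) := by
    rw [meas_inter_Icc μ hX]
    have h1 := mtoReal_union μ (C := (Set.Ico (y + rj y) (y + rj y + e) ∩ Set.Icc (0:ℝ) 1) ∪
        (Set.Ioc (y - rj y - e) (y - rj y) ∩ Set.Icc (0:ℝ) 1))
      (ball_split μ hX s c hs hc hreg Mj hMj rj hratt y ⟨hy0, hy1⟩ e he)
    have h2 := mtoReal_union μ (subset_refl ((Set.Ico (y + rj y) (y + rj y + e) ∩ Set.Icc (0:ℝ) 1) ∪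
        (Set.Ioc (y - rj y - e) (y - rj y) ∩ Set.Icc (0:ℝ) 1)))
    rw [hratt y ⟨hy0, hy1⟩] at h1
    linarith
  constructor
  · linarith [hplus.1, hminus.1]
  · intro hgood
    linarith [hplus.2 hgood, hminus.2 hgood]
end

lemma core (μ : Measure ℝ) [IsProbabilityMeasure μ]
    (T : ℝ → ℝ) (hT : MeasurePreserving T μ μ) (p : ℕ → ℝ) (hp : ∀ n, 0 < p n)
    (hdecay : ∀ n : ℕ, ∀ g h : ℝ → ℝ, Integrable g μ →
      eVariationOn h (Set.Icc (0:ℝ) 1) ≠ ⊤ →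
      |∫ x, g (T^[n] x) * h x ∂μ - (∫ x, g x ∂μ) * ∫ x, h x ∂μ|
        ≤ (∫ x, |g x| ∂μ) * BVNorm h * p n)
    (r : ℕ → ℝ → ℝ) (hrLip : ∀ j, LipschitzWith 1 (r j))
    (f : ℝ → ℝ) (L : NNReal) (hfLip : LipschitzOnWith L f (Set.Icc (0:ℝ) 1))
    (hfmaps : MapsTo f (Set.Icc (0:ℝ) 1) (Set.Icc (0:ℝ) 1))
    (n m : ℕ) (Δ : ℝ) (hΔ0 : 0 < Δ) (κ γ : ℝ)
    (hQ : ∀ y ∈ Set.Icc (0:ℝ) 1,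
      (μ (Metric.ball y (r n y + 2*((L:ℝ)+1)*Δ) ∩
          T^[m] ⁻¹' Metric.ball y (r (n+m) y + 2*((L:ℝ)+1)*Δ))).toReal ≤ κ ∧
      (μ (Metric.ball y (r n y + 2*((L:ℝ)+1)*Δ) ∩
          T^[m] ⁻¹' Metric.ball y (r (n+m) y + 2*((L:ℝ)+1)*Δ))).toReal ≤ γ) :
    (μ ({x ∈ Set.Icc (0:ℝ) 1 | |T^[n] x - f x| < r n (f x)} ∩
        {x ∈ Set.Icc (0:ℝ) 1 | |T^[n + m] x - f x| < r (n + m) (f x)})).toReal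
      ≤ κ + 3 * p n * ((1/Δ + 2) * γ) := by
  classical
  set LL : ℝ := (L : ℝ) with hLL
  have hLL0 : 0 ≤ LL := NNReal.coe_nonneg L
  set e : ℝ := 2*(LL+1)*Δ with hedef
  have he : 0 < e := by positivity
  set N : ℕ := ⌈1/Δ⌉₊ with hN
  set z : ℕ → ℝ := fun k => min ((k:ℝ)*Δ) 1 with hz
  have hzI : ∀ k, z k ∈ Set.Icc (0:ℝ) 1 := fun k =>
    ⟨le_min (by positivity) zero_le_one, min_le_right _ _⟩
  set y : ℕ → ℝ := fun k => f (z k) with hy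
  have hyI : ∀ k, y k ∈ Set.Icc (0:ℝ) 1 := fun k => hfmaps (hzI k)
  set Ik : ℕ → Set ℝ := fun k => Set.Ico ((k:ℝ)*Δ) (((k:ℝ)+1)*Δ) with hIk
  set A : ℕ → Set ℝ := fun k => Metric.ball (y k) (r n (y k) + e) ∩
      T^[m] ⁻¹' Metric.ball (y k) (r (n+m) (y k) + e) with hA
  set Q : ℕ → ℝ := fun k => (μ (A k)).toReal with hQdef
  have hQκ : ∀ k, Q k ≤ κ := fun k => (hQ (y k) (hyI k)).1
  have hQγ : ∀ k, Q k ≤ γ := fun k => (hQ (y k) (hyI k)).2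
  have hQ0 : ∀ k, 0 ≤ Q k := fun k => ENNReal.toReal_nonneg
  have hκ0 : 0 ≤ κ := le_trans (hQ0 0) (hQκ 0)
  have hγ0 : 0 ≤ γ := le_trans (hQ0 0) (hQγ 0)
  set S : Set ℝ := {x ∈ Set.Icc (0:ℝ) 1 | |T^[n] x - f x| < r n (f x)} ∩
      {x ∈ Set.Icc (0:ℝ) 1 | |T^[n + m] x - f x| < r (n + m) (f x)} with hS
  -- covering
  have hcover : S ⊆ ⋃ k ∈ Finset.range (N+1), (S ∩ Ik k) := by
    intro x hx
    have hxI : x ∈ Set.Icc (0:ℝ) 1 := hx.1.1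
    obtain ⟨hx0, hx1⟩ := hxI
    set k : ℕ := ⌊x/Δ⌋₊ with hk
    have hk1 : (k:ℝ)*Δ ≤ x := by
      have := Nat.floor_le (a := x/Δ) (by positivity)
      calc (k:ℝ)*Δ ≤ (x/Δ)*Δ := by nlinarith
        _ = x := by field_simp
    have hk2 : x < ((k:ℝ)+1)*Δ := by
      have := Nat.lt_floor_add_one (x/Δ)
      calc x = (x/Δ)*Δ := by field_simp
        _ < ((k:ℝ)+1)*Δ := by nlinarith
    have hkN : k < N + 1 := by
      have h1 : (k:ℝ) ≤ x/Δ := Nat.floor_le (by positivity)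
      have h2 : x/Δ ≤ 1/Δ := by
        gcongr
      have h3 : (1:ℝ)/Δ ≤ (N:ℝ) := Nat.le_ceil _
      have : (k:ℝ) ≤ (N:ℝ) := le_trans h1 (le_trans h2 h3)
      exact Nat.lt_succ_of_le (Nat.cast_le.1 this)
    exact Set.mem_biUnion (Finset.mem_range.2 hkN) ⟨hx, hk1, hk2⟩
  -- inclusion per k
  have hincl : ∀ k, S ∩ Ik k ⊆ T^[n] ⁻¹' (A k) ∩ Ik k := by
    intro k x hx
    obtain ⟨⟨⟨hxI, hxn⟩, ⟨_, hxm⟩⟩, hxk⟩ := hx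
    refine ⟨?_, hxk⟩
    obtain ⟨hx0, hx1⟩ := hxI
    have hxz : |x - z k| ≤ Δ := by
      rcases min_cases ((k:ℝ)*Δ) 1 with ⟨hmin, hle⟩ | ⟨hmin, hlt⟩
      · rw [hz]; simp only [hmin]
        rw [abs_of_nonneg (by linarith [hxk.1])]
        have := hxk.2; linarith [hxk.1, hxk.2]
      · rw [hz]; simp only [hmin]
        rw [abs_of_nonpos (by linarith)]
        linarith [hxk.1]
    have hfz : |f x - y k| ≤ LL * Δ := by
      have hd := hfLip.dist_le_mul x ⟨hx0, hx1⟩ (z k) (hzI k)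
      rw [Real.dist_eq, Real.dist_eq] at hd
      calc |f x - y k| ≤ LL * |x - z k| := hd
        _ ≤ LL * Δ := by nlinarith [abs_nonneg (x - z k)]
    have hrz : ∀ j, r j (f x) ≤ r j (y k) + LL * Δ := by
      intro j
      have hd : |r j (f x) - r j (y k)| ≤ |f x - y k| := by
        simpa [Real.dist_eq] using (hrLip j).dist_le_mul (f x) (y k)
      have h2 : |r j (f x) - r j (y k)| ≤ LL * Δ := hd.trans hfz
      linarith [abs_le.1 h2 |>.2, abs_le.1 h2 |>.1]
    have hball : ∀ j (w : ℝ), |w - f x| < r j (f x) → w ∈ Metric.ball (y k) (r j (y k) + e) := by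
      intro j w hw
      rw [Metric.mem_ball, Real.dist_eq]
      have h1 : |w - y k| ≤ |w - f x| + |f x - y k| := abs_sub_le _ _ _
      have h2 : 2 * LL * Δ ≤ e := by rw [hedef]; nlinarith
      calc |w - y k| ≤ |w - f x| + |f x - y k| := h1
        _ < r j (f x) + LL * Δ := by linarith
        _ ≤ r j (y k) + LL * Δ + LL * Δ := by linarith [hrz j]
        _ ≤ r j (y k) + e := by linarith
    have hn' : T^[n] x ∈ Metric.ball (y k) (r n (y k) + e) := hball n _ hxn
    have hm' : T^[m] (T^[n] x) ∈ Metric.ball (y k) (r (n+m) (y k) + e) := by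
      have : T^[m] (T^[n] x) = T^[n+m] x := by
        rw [Nat.add_comm n m, Function.iterate_add_apply]
      rw [this]
      exact hball (n+m) _ hxm
    exact ⟨hn', hm'⟩
  -- measure bound per k
  have hmeasA : ∀ k, MeasurableSet (A k) := by
    intro k
    exact (measurableSet_ball).inter ((hT.measurable.iterate m) measurableSet_ball)
  have hperk : ∀ k, (μ (S ∩ Ik k)).toReal ≤ Q k * (μ (Ik k)).toReal + 3 * (Q k * p n) := by
    intro k
    have h1 : (μ (S ∩ Ik k)).toReal ≤ (μ (T^[n] ⁻¹' (A k) ∩ Ik k)).toReal :=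
      ENNReal.toReal_mono (measure_ne_top μ _) (measure_mono (hincl k))
    have h2 := decay_ind μ T hT p hp hdecay n (A k) (Ik k) (hmeasA k) measurableSet_Ico
      (evar_Ico _ _ (by nlinarith [Nat.cast_nonneg (α := ℝ) k]))
    exact h1.trans h2
  -- sum up
  have hsum1 : (μ S).toReal ≤ ∑ k ∈ Finset.range (N+1), (μ (S ∩ Ik k)).toReal := by
    have h1 : μ S ≤ ∑ k ∈ Finset.range (N+1), μ (S ∩ Ik k) :=
      (measure_mono hcover).trans (measure_biUnion_finset_le _ _)
    have h2 : (∑ k ∈ Finset.range (N+1), μ (S ∩ Ik k)).toReal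
        = ∑ k ∈ Finset.range (N+1), (μ (S ∩ Ik k)).toReal :=
      ENNReal.toReal_sum (fun a _ => measure_ne_top μ _)
    calc (μ S).toReal ≤ (∑ k ∈ Finset.range (N+1), μ (S ∩ Ik k)).toReal :=
          ENNReal.toReal_mono (ENNReal.sum_lt_top.2 fun a _ => measure_lt_top μ _).ne h1
      _ = _ := h2
  have hIkdisj : (↑(Finset.range (N+1)) : Set ℕ).PairwiseDisjoint Ik := by
    intro a _ b _ hab
    refine Set.disjoint_left.2 fun x hxa hxb => ?_
    rcases lt_or_gt_of_ne hab with hlt | hlt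
    · have h1 : ((a:ℝ)+1) ≤ (b:ℝ) := by exact_mod_cast Nat.succ_le_of_lt hlt
      have := hxa.2; have := hxb.1
      nlinarith
    · have h1 : ((b:ℝ)+1) ≤ (a:ℝ) := by exact_mod_cast Nat.succ_le_of_lt hlt
      have := hxb.2; have := hxa.1
      nlinarith
  have hIksum : ∑ k ∈ Finset.range (N+1), (μ (Ik k)).toReal ≤ 1 := by
    have heq : μ (⋃ k ∈ Finset.range (N+1), Ik k) = ∑ k ∈ Finset.range (N+1), μ (Ik k) :=
      measure_biUnion_finset hIkdisj fun k _ => measurableSet_Ico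
    calc ∑ k ∈ Finset.range (N+1), (μ (Ik k)).toReal
        = (∑ k ∈ Finset.range (N+1), μ (Ik k)).toReal :=
          (ENNReal.toReal_sum fun a _ => measure_ne_top μ _).symm
      _ = (μ (⋃ k ∈ Finset.range (N+1), Ik k)).toReal := by rw [heq]
      _ ≤ (μ Set.univ).toReal := ENNReal.toReal_mono (measure_ne_top μ _)
          (measure_mono (Set.subset_univ _))
      _ = 1 := by simp
  have hmIk0 : ∀ k, 0 ≤ (μ (Ik k)).toReal := fun k => ENNReal.toReal_nonneg
  have hNbound : ((N:ℝ) + 1) ≤ 1/Δ + 2 := by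
    have := Nat.ceil_lt_add_one (a := 1/Δ) (by positivity)
    push_cast [hN]
    linarith
  calc (μ S).toReal ≤ ∑ k ∈ Finset.range (N+1), (μ (S ∩ Ik k)).toReal := hsum1
    _ ≤ ∑ k ∈ Finset.range (N+1), (Q k * (μ (Ik k)).toReal + 3 * (Q k * p n)) :=
        Finset.sum_le_sum fun k _ => hperk k
    _ = (∑ k ∈ Finset.range (N+1), Q k * (μ (Ik k)).toReal)
        + ∑ k ∈ Finset.range (N+1), 3 * (Q k * p n) := Finset.sum_add_distrib
    _ ≤ κ + 3 * p n * ((1/Δ + 2) * γ) := by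
        have hA1 : (∑ k ∈ Finset.range (N+1), Q k * (μ (Ik k)).toReal) ≤ κ := by
          calc (∑ k ∈ Finset.range (N+1), Q k * (μ (Ik k)).toReal)
              ≤ ∑ k ∈ Finset.range (N+1), κ * (μ (Ik k)).toReal :=
                Finset.sum_le_sum fun k _ => mul_le_mul_of_nonneg_right (hQκ k) (hmIk0 k)
            _ = κ * ∑ k ∈ Finset.range (N+1), (μ (Ik k)).toReal := (Finset.mul_sum _ _ _).symm
            _ ≤ κ * 1 := mul_le_mul_of_nonneg_left hIksum hκ0
            _ = κ := mul_one κ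
        have hA2 : (∑ k ∈ Finset.range (N+1), 3 * (Q k * p n)) ≤ 3 * p n * ((1/Δ + 2) * γ) := by
          calc (∑ k ∈ Finset.range (N+1), 3 * (Q k * p n))
              ≤ ∑ k ∈ Finset.range (N+1), 3 * (γ * p n) :=
                Finset.sum_le_sum fun k _ => by
                  have := hQγ k
                  nlinarith [(hp n).le]
            _ = ((N:ℝ) + 1) * (3 * (γ * p n)) := by
                rw [Finset.sum_const, Finset.card_range]
                push_cast
                ring
            _ ≤ (1/Δ + 2) * (3 * (γ * p n)) := mul_le_mul_of_nonneg_right hNbound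
                (by have := (hp n).le; positivity)
            _ = 3 * p n * ((1/Δ + 2) * γ) := by ring
        linarith


lemma s_le_one (μ : Measure ℝ) [IsProbabilityMeasure μ] (hX : μ (Set.Icc (0:ℝ) 1) = 1)
    (s c : ℝ) (hs : 0 < s) (hc : 0 < c)
    (hreg : ∀ x ∈ Set.Icc (0:ℝ) 1, ∀ ρ : ℝ, 0 < ρ →
      (μ (Metric.ball x ρ ∩ Set.Icc (0:ℝ) 1)).toReal ≤ c * ρ ^ s) : s ≤ 1 := by
  by_contra hcon
  push_neg at hcon
  set n : ℕ := ⌈(2*c)^(1/(s-1))⌉₊ + 1 with hn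
  have hn1 : 1 ≤ n := Nat.le_add_left 1 _
  have hnpos : (0:ℝ) < n := by exact_mod_cast Nat.lt_of_lt_of_le Nat.zero_lt_one hn1
  have hxn : (2*c)^(1/(s-1)) < (n:ℝ) := by
    have h1 : (2*c)^(1/(s-1)) ≤ (⌈(2*c)^(1/(s-1))⌉₊ : ℝ) := Nat.le_ceil _
    have h2 : ((⌈(2*c)^(1/(s-1))⌉₊ : ℝ)) < (n:ℝ) := by
      rw [hn]; push_cast; linarith
    linarith
  have hB : 2*c < (n:ℝ)^(s-1) := by
    have h0 : (0:ℝ) ≤ (2*c)^(1/(s-1)) := Real.rpow_nonneg (by linarith) _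
    have h1 : ((2*c)^(1/(s-1)))^(s-1) < (n:ℝ)^(s-1) :=
      Real.rpow_lt_rpow h0 hxn (by linarith)
    have h2 : ((2*c)^(1/(s-1)))^(s-1) = 2*c := by
      rw [← Real.rpow_mul (by linarith)]
      rw [one_div, inv_mul_cancel₀ (by intro h; apply absurd (sub_eq_zero.1 h).symm; intro h2; linarith)]
      exact Real.rpow_one _
    linarith
  -- covering estimate
  have hsub : Set.Icc (0:ℝ) 1 ⊆ ⋃ k ∈ Finset.range (n+1),
      (Metric.ball ((k:ℝ)/n) (1/n) ∩ Set.Icc (0:ℝ) 1) := by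
    intro x hx
    obtain ⟨hx0, hx1⟩ := hx
    set k : ℕ := ⌊x*n⌋₊ with hk
    have hk1 : (k:ℝ) ≤ x*n := Nat.floor_le (by positivity)
    have hk2 : x*n < (k:ℝ)+1 := Nat.lt_floor_add_one _
    have hkn : k < n + 1 := by
      have : (k:ℝ) ≤ (n:ℝ) := hk1.trans (by nlinarith)
      exact Nat.lt_succ_of_le (Nat.cast_le.1 this)
    refine Set.mem_biUnion (Finset.mem_range.2 hkn) ⟨?_, hx0, hx1⟩
    rw [Metric.mem_ball, Real.dist_eq]
    rw [abs_of_nonneg (by rw [sub_nonneg, div_le_iff₀ hnpos]; linarith)]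
    rw [sub_lt_iff_lt_add, ← add_div, lt_div_iff₀ hnpos]
    linarith
  have hbound : (1:ℝ) ≤ ((n:ℝ)+1) * (c * (1/n)^s) := by
    have h1 : μ (Set.Icc (0:ℝ) 1) ≤ ∑ k ∈ Finset.range (n+1),
        μ (Metric.ball ((k:ℝ)/n) (1/n) ∩ Set.Icc (0:ℝ) 1) :=
      (measure_mono hsub).trans (measure_biUnion_finset_le _ _)
    have h2 : (μ (Set.Icc (0:ℝ) 1)).toReal = 1 := by rw [hX]; simp
    have h3 : (μ (Set.Icc (0:ℝ) 1)).toReal ≤ ∑ k ∈ Finset.range (n+1),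
        (μ (Metric.ball ((k:ℝ)/n) (1/n) ∩ Set.Icc (0:ℝ) 1)).toReal := by
      calc (μ (Set.Icc (0:ℝ) 1)).toReal
          ≤ (∑ k ∈ Finset.range (n+1), μ (Metric.ball ((k:ℝ)/n) (1/n) ∩ Set.Icc (0:ℝ) 1)).toReal :=
            ENNReal.toReal_mono (ENNReal.sum_lt_top.2 fun a _ => measure_lt_top μ _).ne h1
        _ = _ := ENNReal.toReal_sum fun a _ => measure_ne_top μ _
    have h4 : ∑ k ∈ Finset.range (n+1),
        (μ (Metric.ball ((k:ℝ)/n) (1/n) ∩ Set.Icc (0:ℝ) 1)).toReal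
        ≤ ∑ k ∈ Finset.range (n+1), c * (1/n)^s := by
      refine Finset.sum_le_sum fun k hk => ?_
      have hkn : (k:ℝ)/n ∈ Set.Icc (0:ℝ) 1 := by
        constructor
        · positivity
        · rw [div_le_one hnpos]
          exact_mod_cast Nat.le_of_lt_succ (Finset.mem_range.1 hk)
      exact hreg _ hkn (1/n) (by positivity)
    rw [Finset.sum_const, Finset.card_range, nsmul_eq_mul] at h4
    have h5 := h2 ▸ (h3.trans h4)
    calc (1:ℝ) ≤ ((n+1:ℕ):ℝ) * (c * (1/n)^s) := h5
      _ = ((n:ℝ)+1) * (c * (1/n)^s) := by push_cast; ring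
  -- contradiction
  have hfin : ((n:ℝ)+1) * (c * (1/n)^s) < 1 := by
    have hsplit : ((1:ℝ)/n)^s = (1/n) * ((n:ℝ)^(s-1))⁻¹ := by
      have h1 : ((1:ℝ)/n)^s = (1/n)^(1:ℝ) * (1/n)^(s-1) := by
        rw [← Real.rpow_add (by positivity)]
        norm_num
      rw [h1, Real.rpow_one]
      congr 1
      rw [one_div, Real.inv_rpow (Nat.cast_nonneg n)]
    set B : ℝ := (n:ℝ)^(s-1) with hBdef
    have hBpos : 0 < B := Real.rpow_pos_of_pos hnpos _
    rw [hsplit]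
    have hn1' : (1:ℝ) ≤ (n:ℝ) := by exact_mod_cast hn1
    have heq : ((n:ℝ)+1) * (c * ((1/n) * B⁻¹)) = (((n:ℝ)+1)*c)/((n:ℝ)*B) := by
      field_simp
    rw [heq, div_lt_one (by positivity)]
    nlinarith
  linarith

set_option maxHeartbeats 1000000 in
/-- quasi-independence estimate for the sets
`R_j = {x : |T^j x − f(x)| < r_j(f(x))}` under decay of correlations and upper
Ahlfors regularity. -/
theorem stmt15 (μ : Measure ℝ) [IsProbabilityMeasure μ] (hX : μ (Set.Icc (0:ℝ) 1) = 1)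
    (T : ℝ → ℝ) (hT : MeasurePreserving T μ μ) (p : ℕ → ℝ) (hp : ∀ n, 0 < p n)
    (hdecay : ∀ n : ℕ, ∀ g h : ℝ → ℝ, Integrable g μ →
      eVariationOn h (Set.Icc (0:ℝ) 1) ≠ ⊤ →
      |∫ x, g (T^[n] x) * h x ∂μ - (∫ x, g x ∂μ) * ∫ x, h x ∂μ|
        ≤ (∫ x, |g x| ∂μ) * BVNorm h * p n)
    (s c : ℝ) (hs : 0 < s) (hc : 0 < c)
    (hreg : ∀ x ∈ Set.Icc (0:ℝ) 1, ∀ ρ : ℝ, 0 < ρ →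
      (μ (Metric.ball x ρ ∩ Set.Icc (0:ℝ) 1)).toReal ≤ c * ρ ^ s)
    (M : ℕ → ℝ) (hM : ∀ n, M n ∈ Set.Ioo (0:ℝ) 1) (r : ℕ → ℝ → ℝ)
    (hrLip : ∀ n, LipschitzWith 1 (r n))
    (hratt : ∀ n, ∀ x ∈ Set.Icc (0:ℝ) 1,
      (μ (Metric.ball x (r n x) ∩ Set.Icc (0:ℝ) 1)).toReal = M n)
    (f : ℝ → ℝ) (L : NNReal) (hfLip : LipschitzOnWith L f (Set.Icc (0:ℝ) 1))
    (hfMono : MonotoneOn f (Set.Icc (0:ℝ) 1))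
    (hfmaps : MapsTo f (Set.Icc (0:ℝ) 1) (Set.Icc (0:ℝ) 1)) :
    ∃ K₁ K₂ K₃ : ℝ, 0 < K₁ ∧ 0 < K₂ ∧ 0 < K₃ ∧ ∀ n m : ℕ,
      (μ ({x ∈ Set.Icc (0:ℝ) 1 | |T^[n] x - f x| < r n (f x)} ∩
          {x ∈ Set.Icc (0:ℝ) 1 | |T^[n + m] x - f x| < r (n + m) (f x)})).toReal
        ≤ M n * M (n + m) * (1 + K₁ * Real.sqrt (p n))
          + K₂ * (M n * p n ^ (s / 2) + M (n + m) * (p n ^ (s / 2) + p m))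
          + K₃ * p n ^ s := by
  have hs1 : s ≤ 1 := s_le_one μ hX s c hs hc hreg
  set cg : ℝ := c * (2*((L:ℝ)+1))^s with hcgdef
  have hLL0 : (0:ℝ) ≤ (L:ℝ) := NNReal.coe_nonneg L
  have hcg0 : 0 < cg := by
    have : (0:ℝ) < (2*((L:ℝ)+1))^s := Real.rpow_pos_of_pos (by positivity) s
    positivity
  set Ca : ℝ := 2*cg with hCadef
  have hCa0 : 0 < Ca := by positivity
  refine ⟨1, 40*(cg+Ca+1), 40*(Ca*Ca+Ca+1), one_pos, by positivity, by positivity, ?_⟩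
  intro n m
  -- abbreviations
  set a : ℝ := M n with hadef
  set b : ℝ := M (n+m) with hbdef
  set q : ℝ := p n with hqdef
  set t : ℝ := p m with htdef
  obtain ⟨ha0, ha1⟩ := hM n
  obtain ⟨hb0, hb1⟩ := hM (n+m)
  have hq0 : 0 < q := hp n
  have ht0 : 0 < t := hp m
  have hsq0 : 0 ≤ Real.sqrt q := Real.sqrt_nonneg q
  have hqs0 : 0 < q^s := Real.rpow_pos_of_pos hq0 s
  have hqs20 : 0 < q^(s/2) := Real.rpow_pos_of_pos hq0 (s/2)
  set X : ℝ := (μ ({x ∈ Set.Icc (0:ℝ) 1 | |T^[n] x - f x| < r n (f x)} ∩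
      {x ∈ Set.Icc (0:ℝ) 1 | |T^[n + m] x - f x| < r (n + m) (f x)})).toReal with hXdef
  -- the RHS target decomposed
  have hRHS : a * b * (1 + 1 * Real.sqrt q)
      + 40*(cg+Ca+1) * (a * q^(s/2) + b * (q^(s/2) + t))
      + 40*(Ca*Ca+Ca+1) * q^s
      = a*b + a*b*Real.sqrt q + (40*(cg+Ca+1))*(a*q^(s/2))
        + (40*(cg+Ca+1))*(b*q^(s/2)) + (40*(cg+Ca+1))*(b*t) + (40*(Ca*Ca+Ca+1))*q^s := by
    ring
  rw [hRHS]
  -- generic ball bounds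
  have hballΔ : ∀ Δ : ℝ, 0 < Δ → ∀ j : ℕ, ∀ y ∈ Set.Icc (0:ℝ) 1,
      (μ (Metric.ball y (r j y + 2*((L:ℝ)+1)*Δ))).toReal ≤ M j + Ca * Δ^s
      ∧ (cg * Δ^s ≤ M j → (μ (Metric.ball y (r j y + 2*((L:ℝ)+1)*Δ))).toReal ≤ 3 * M j) := by
    intro Δ hΔ j y hy
    have hE : c * (2*((L:ℝ)+1)*Δ)^s = cg * Δ^s := by
      rw [Real.mul_rpow (by positivity) hΔ.le, hcgdef]
      ring
    have hb' := ball_upper μ hX s c hs hc hreg (M j) (hM j).1 (r j) (hratt j) y hy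
      (2*((L:ℝ)+1)*Δ) (by positivity)
    constructor
    · have h1 := hb'.1
      rw [hE] at h1
      rw [hCadef]
      linarith
    · intro hgood
      exact hb'.2 (by rw [hE]; exact hgood)
  have hrpos : ∀ j : ℕ, ∀ y ∈ Set.Icc (0:ℝ) 1, 0 < r j y := fun j =>
    r_pos μ hX s c hs hc hreg (M j) (hM j).1 (r j) (hratt j)
  -- Q bounds
  have hQ1 : ∀ Δ : ℝ, 0 < Δ → ∀ y ∈ Set.Icc (0:ℝ) 1,
      (μ (Metric.ball y (r n y + 2*((L:ℝ)+1)*Δ) ∩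
        T^[m] ⁻¹' Metric.ball y (r (n+m) y + 2*((L:ℝ)+1)*Δ))).toReal
      ≤ (μ (Metric.ball y (r (n+m) y + 2*((L:ℝ)+1)*Δ))).toReal := by
    intro Δ hΔ y hy
    have hpre : μ (T^[m] ⁻¹' Metric.ball y (r (n+m) y + 2*((L:ℝ)+1)*Δ))
        = μ (Metric.ball y (r (n+m) y + 2*((L:ℝ)+1)*Δ)) :=
      (hT.iterate m).measure_preimage measurableSet_ball.nullMeasurableSet
    calc (μ (Metric.ball y (r n y + 2*((L:ℝ)+1)*Δ) ∩
        T^[m] ⁻¹' Metric.ball y (r (n+m) y + 2*((L:ℝ)+1)*Δ))).toReal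
        ≤ (μ (T^[m] ⁻¹' Metric.ball y (r (n+m) y + 2*((L:ℝ)+1)*Δ))).toReal :=
          mtoReal_mono μ Set.inter_subset_right
      _ = _ := by rw [hpre]
  have hQ2 : ∀ Δ : ℝ, 0 < Δ → ∀ y ∈ Set.Icc (0:ℝ) 1,
      (μ (Metric.ball y (r n y + 2*((L:ℝ)+1)*Δ) ∩
        T^[m] ⁻¹' Metric.ball y (r (n+m) y + 2*((L:ℝ)+1)*Δ))).toReal
      ≤ (μ (Metric.ball y (r (n+m) y + 2*((L:ℝ)+1)*Δ))).toReal
          * (μ (Metric.ball y (r n y + 2*((L:ℝ)+1)*Δ))).toReal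
        + 3 * ((μ (Metric.ball y (r (n+m) y + 2*((L:ℝ)+1)*Δ))).toReal * t) := by
    intro Δ hΔ y hy
    have hbv : eVariationOn ((Metric.ball y (r n y + 2*((L:ℝ)+1)*Δ)).indicator
        fun _ => (1:ℝ)) (Set.Icc 0 1) ≤ 2 := by
      rw [Real.ball_eq_Ioo]
      exact evar_Ioo _ _ (by linarith [hrpos n y hy, mul_pos (mul_pos two_pos
        (by positivity : (0:ℝ) < (L:ℝ)+1)) hΔ])
    have hd := decay_ind μ T hT p hp hdecay m
      (Metric.ball y (r (n+m) y + 2*((L:ℝ)+1)*Δ))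
      (Metric.ball y (r n y + 2*((L:ℝ)+1)*Δ))
      measurableSet_ball measurableSet_ball hbv
    rw [Set.inter_comm] at hd
    exact hd
  have hX1 : X ≤ 1 := by
    rw [hXdef]
    calc (μ _).toReal ≤ (μ Set.univ).toReal :=
          mtoReal_mono μ (Set.subset_univ _)
      _ = 1 := by simp
  by_cases hq1 : q ≤ 1
  swap
  · -- case q > 1
    push_neg at hq1
    have h1q : (1:ℝ) ≤ q^s := by
      have := Real.rpow_le_rpow zero_le_one hq1.le hs.le
      rwa [Real.one_rpow] at this
    have e1 : 0 ≤ a*b*Real.sqrt q := by positivity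
    have e2 : 0 ≤ (40*(cg+Ca+1))*(a*q^(s/2)) := by positivity
    have e3 : 0 ≤ (40*(cg+Ca+1))*(b*q^(s/2)) := by positivity
    have e4 : 0 ≤ (40*(cg+Ca+1))*(b*t) := by positivity
    have e5 : 0 ≤ a*b := by positivity
    have hCaCa : (0:ℝ) ≤ Ca*Ca := by positivity
    have e6 : (1:ℝ) ≤ (40*(Ca*Ca+Ca+1))*q^s := by
      have hcoef : (1:ℝ) ≤ 40*(Ca*Ca+Ca+1) := by linarith
      calc (1:ℝ) ≤ 40*(Ca*Ca+Ca+1) := hcoef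
        _ = (40*(Ca*Ca+Ca+1))*1 := (mul_one _).symm
        _ ≤ (40*(Ca*Ca+Ca+1))*q^s := mul_le_mul_of_nonneg_left h1q (by linarith)
    linarith
  -- now q ≤ 1
  have hq_le : q ≤ q^(s/2) := by
    have := Real.rpow_le_rpow_of_exponent_ge hq0 hq1 (by linarith : s/2 ≤ 1)
    rwa [Real.rpow_one] at this
  have hqs_le : q^s ≤ q^(s/2) :=
    Real.rpow_le_rpow_of_exponent_ge hq0 hq1 (by linarith : s/2 ≤ s)
  have hqs_le1 : q^s ≤ 1 := Real.rpow_le_one hq0.le hq1 hs.le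
  have hqs2mul : q^(s/2) * q^(s/2) = q^s := by
    rw [← Real.rpow_add hq0]
    norm_num
  by_cases ht1 : t ≤ 1
  swap
  · -- case t > 1 : coarse bound with Δ = q
    push_neg at ht1
    have hQcase : ∀ y ∈ Set.Icc (0:ℝ) 1,
        (μ (Metric.ball y (r n y + 2*((L:ℝ)+1)*q) ∩
          T^[m] ⁻¹' Metric.ball y (r (n+m) y + 2*((L:ℝ)+1)*q))).toReal ≤ b + Ca*q^s ∧
        (μ (Metric.ball y (r n y + 2*((L:ℝ)+1)*q) ∩
          T^[m] ⁻¹' Metric.ball y (r (n+m) y + 2*((L:ℝ)+1)*q))).toReal ≤ b + Ca*q^s := by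
      intro y hy
      have h1 := (hQ1 q hq0 y hy).trans (hballΔ q hq0 (n+m) y hy).1
      exact ⟨h1, h1⟩
    have hcore := core μ T hT p hp hdecay r hrLip f L hfLip hfmaps n m q hq0
      (b+Ca*q^s) (b+Ca*q^s) hQcase
    rw [← hXdef, ← hqdef] at hcore
    have harith : 3*q*((1/q + 2)*(b+Ca*q^s)) = 3*(b+Ca*q^s) + 6*(q*(b+Ca*q^s)) := by
      field_simp
      ring
    have hqb : q*(b+Ca*q^s) ≤ (b+Ca*q^s) := mul_le_of_le_one_left (by positivity) hq1
    have hXb : X ≤ 10*(b+Ca*q^s) := by linarith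
    have hbt : b ≤ b*t := le_mul_of_one_le_right hb0.le ht1.le
    have hcoef1 : (10:ℝ) ≤ 40*(cg+Ca+1) := by linarith
    have f1 : 10*(b*t) ≤ (40*(cg+Ca+1))*(b*t) := by
      have : (0:ℝ) ≤ b*t := by positivity
      exact mul_le_mul_of_nonneg_right hcoef1 this
    have hCaCa : (0:ℝ) ≤ Ca*Ca := by positivity
    have hcoef2 : (10:ℝ)*Ca ≤ 40*(Ca*Ca+Ca+1) := by linarith
    have f2 : (10*Ca)*q^s ≤ (40*(Ca*Ca+Ca+1))*q^s :=
      mul_le_mul_of_nonneg_right hcoef2 hqs0.le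
    have e1 : 0 ≤ a*b*Real.sqrt q := by positivity
    have e2 : 0 ≤ (40*(cg+Ca+1))*(a*q^(s/2)) := by positivity
    have e3 : 0 ≤ (40*(cg+Ca+1))*(b*q^(s/2)) := by positivity
    have e5 : 0 ≤ a*b := by positivity
    linarith
  -- now t ≤ 1
  have hCaCa : (0:ℝ) ≤ Ca*Ca := by positivity
  set D : ℝ := q^(1-(s/2)) with hDdef
  have hD0 : 0 < D := Real.rpow_pos_of_pos hq0 _
  have hDs_eq : D^s = q^((1-(s/2))*s) := by
    rw [hDdef]
    exact (Real.rpow_mul hq0.le _ _).symm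
  have hDs_le : D^s ≤ q^(s/2) := by
    rw [hDs_eq]
    apply Real.rpow_le_rpow_of_exponent_ge hq0 hq1
    nlinarith
  have hDs0 : 0 < D^s := Real.rpow_pos_of_pos hD0 s
  by_cases hgood : cg * D^s ≤ b
  · -- case 3a : target measure not too small
    have hQcase : ∀ y ∈ Set.Icc (0:ℝ) 1,
        (μ (Metric.ball y (r n y + 2*((L:ℝ)+1)*D) ∩
          T^[m] ⁻¹' Metric.ball y (r (n+m) y + 2*((L:ℝ)+1)*D))).toReal
          ≤ (b + Ca*D^s)*(a + Ca*D^s) + 3*((3*b)*t) ∧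
        (μ (Metric.ball y (r n y + 2*((L:ℝ)+1)*D) ∩
          T^[m] ⁻¹' Metric.ball y (r (n+m) y + 2*((L:ℝ)+1)*D))).toReal ≤ 3*b := by
      intro y hy
      have hbm := hballΔ D hD0 (n+m) y hy
      have hbn := (hballΔ D hD0 n y hy).1
      have goodm := hbm.2 hgood
      have hQa := hQ2 D hD0 y hy
      have hQb := (hQ1 D hD0 y hy).trans goodm
      constructor
      · refine hQa.trans ?_
        have hnn1 : (0:ℝ) ≤ (μ (Metric.ball y (r n y + 2*((L:ℝ)+1)*D))).toReal :=
          ENNReal.toReal_nonneg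
        have hnn2 : (0:ℝ) ≤ (μ (Metric.ball y (r (n+m) y + 2*((L:ℝ)+1)*D))).toReal :=
          ENNReal.toReal_nonneg
        have h2 := mul_le_mul hbm.1 hbn hnn1
          (add_nonneg hb0.le (mul_nonneg hCa0.le hDs0.le))
        have h3 := mul_le_mul_of_nonneg_right goodm ht0.le
        linarith
      · exact hQb
    have hcore := core μ T hT p hp hdecay r hrLip f L hfLip hfmaps n m D hD0
      ((b + Ca*D^s)*(a + Ca*D^s) + 3*((3*b)*t)) (3*b) hQcase
    rw [← hXdef, ← hqdef] at hcore
    have hqD : q*(1/D) = q^(s/2) := by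
      have h1 : q*(1/D) = q^(1:ℝ) * q^(-(1-(s/2))) := by
        rw [hDdef, Real.rpow_one, one_div, ← Real.rpow_neg hq0.le]
      rw [h1, ← Real.rpow_add hq0]
      congr 1
      ring
    have herr : 3*q*((1/D+2)*(3*b)) ≤ 27*(b*q^(s/2)) := by
      have h1 : 3*q*((1/D+2)*(3*b)) = 9*(q*(1/D))*b + 18*(q*b) := by ring
      rw [h1, hqD]
      have h2 : q*b ≤ q^(s/2)*b := mul_le_mul_of_nonneg_right hq_le hb0.le
      linarith
    have p1 : Ca*D^s*a ≤ Ca*q^(s/2)*a :=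
      mul_le_mul_of_nonneg_right (mul_le_mul_of_nonneg_left hDs_le hCa0.le) ha0.le
    have p2 : Ca*D^s*b ≤ Ca*q^(s/2)*b :=
      mul_le_mul_of_nonneg_right (mul_le_mul_of_nonneg_left hDs_le hCa0.le) hb0.le
    have p3 : (Ca*D^s)*(Ca*D^s) ≤ (Ca*Ca)*q^s := by
      have h4 : D^s*D^s ≤ q^(s/2)*q^(s/2) :=
        mul_le_mul hDs_le hDs_le hDs0.le hqs20.le
      calc (Ca*D^s)*(Ca*D^s) = (Ca*Ca)*(D^s*D^s) := by ring
        _ ≤ (Ca*Ca)*(q^(s/2)*q^(s/2)) := mul_le_mul_of_nonneg_left h4 hCaCa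
        _ = (Ca*Ca)*q^s := by rw [hqs2mul]
    have hk : (b + Ca*D^s)*(a + Ca*D^s)
        ≤ a*b + Ca*q^(s/2)*a + Ca*q^(s/2)*b + (Ca*Ca)*q^s := by linarith [p1, p2, p3]
    -- final coefficient bounds
    have e1 : 0 ≤ a*b*Real.sqrt q := by positivity
    have c1 : Ca*q^(s/2)*a ≤ (40*(cg+Ca+1))*(a*q^(s/2)) := by
      have : Ca ≤ 40*(cg+Ca+1) := by linarith
      calc Ca*q^(s/2)*a = Ca*(a*q^(s/2)) := by ring
        _ ≤ (40*(cg+Ca+1))*(a*q^(s/2)) := mul_le_mul_of_nonneg_right this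
            (mul_nonneg ha0.le hqs20.le)
    have c2 : Ca*q^(s/2)*b + 27*(b*q^(s/2)) ≤ (40*(cg+Ca+1))*(b*q^(s/2)) := by
      have h5 : Ca + 27 ≤ 40*(cg+Ca+1) := by linarith
      have h6 : Ca*q^(s/2)*b + 27*(b*q^(s/2)) = (Ca+27)*(b*q^(s/2)) := by ring
      rw [h6]
      exact mul_le_mul_of_nonneg_right h5 (mul_nonneg hb0.le hqs20.le)
    have c3 : 9*(b*t) ≤ (40*(cg+Ca+1))*(b*t) := by
      have : (9:ℝ) ≤ 40*(cg+Ca+1) := by linarith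
      exact mul_le_mul_of_nonneg_right this (mul_nonneg hb0.le ht0.le)
    have c4 : (Ca*Ca)*q^s ≤ (40*(Ca*Ca+Ca+1))*q^s := by
      have : Ca*Ca ≤ 40*(Ca*Ca+Ca+1) := by linarith
      exact mul_le_mul_of_nonneg_right this hqs0.le
    have h30 : 3*((3*b)*t) = 9*(b*t) := by ring
    linarith
  · -- case 3b : target measure small
    push_neg at hgood
    have hbsmall : b ≤ cg * q^(s/2) :=
      (hgood.trans_le (mul_le_mul_of_nonneg_left hDs_le hcg0.le)).le
    have hQcase : ∀ y ∈ Set.Icc (0:ℝ) 1,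
        (μ (Metric.ball y (r n y + 2*((L:ℝ)+1)*q) ∩
          T^[m] ⁻¹' Metric.ball y (r (n+m) y + 2*((L:ℝ)+1)*q))).toReal
          ≤ (b + Ca*q^s)*(a + Ca*q^s) + 3*((b + Ca*q^s)*t) ∧
        (μ (Metric.ball y (r n y + 2*((L:ℝ)+1)*q) ∩
          T^[m] ⁻¹' Metric.ball y (r (n+m) y + 2*((L:ℝ)+1)*q))).toReal
          ≤ (b + Ca*q^s)*(a + Ca*q^s) + 3*((b + Ca*q^s)*t) := by
      intro y hy
      have hbm := (hballΔ q hq0 (n+m) y hy).1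
      have hbn := (hballΔ q hq0 n y hy).1
      have hQa := hQ2 q hq0 y hy
      have hnn1 : (0:ℝ) ≤ (μ (Metric.ball y (r n y + 2*((L:ℝ)+1)*q))).toReal :=
        ENNReal.toReal_nonneg
      have hnn2 : (0:ℝ) ≤ (μ (Metric.ball y (r (n+m) y + 2*((L:ℝ)+1)*q))).toReal :=
        ENNReal.toReal_nonneg
      have h2 := mul_le_mul hbm hbn hnn1
        (add_nonneg hb0.le (mul_nonneg hCa0.le hqs0.le))
      have h3 := mul_le_mul_of_nonneg_right hbm ht0.le
      have hres : (μ (Metric.ball y (r n y + 2*((L:ℝ)+1)*q) ∩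
          T^[m] ⁻¹' Metric.ball y (r (n+m) y + 2*((L:ℝ)+1)*q))).toReal
          ≤ (b + Ca*q^s)*(a + Ca*q^s) + 3*((b + Ca*q^s)*t) := by linarith
      exact ⟨hres, hres⟩
    have hcore := core μ T hT p hp hdecay r hrLip f L hfLip hfmaps n m q hq0
      ((b + Ca*q^s)*(a + Ca*q^s) + 3*((b + Ca*q^s)*t))
      ((b + Ca*q^s)*(a + Ca*q^s) + 3*((b + Ca*q^s)*t)) hQcase
    rw [← hXdef, ← hqdef] at hcore
    have hκ0 : (0:ℝ) ≤ (b + Ca*q^s)*(a + Ca*q^s) + 3*((b + Ca*q^s)*t) := by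
      have hx1 : (0:ℝ) ≤ b + Ca*q^s := add_nonneg hb0.le (mul_nonneg hCa0.le hqs0.le)
      have hx2 : (0:ℝ) ≤ a + Ca*q^s := add_nonneg ha0.le (mul_nonneg hCa0.le hqs0.le)
      have := mul_nonneg hx1 hx2
      have := mul_nonneg hx1 ht0.le
      linarith
    have harith : 3*q*((1/q + 2)*((b + Ca*q^s)*(a + Ca*q^s) + 3*((b + Ca*q^s)*t)))
        = 3*((b + Ca*q^s)*(a + Ca*q^s) + 3*((b + Ca*q^s)*t))
          + 6*(q*((b + Ca*q^s)*(a + Ca*q^s) + 3*((b + Ca*q^s)*t))) := by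
      have h0 : q*(1/q) = 1 := by
        rw [one_div]
        exact mul_inv_cancel₀ hq0.ne'
      calc 3*q*((1/q + 2)*((b + Ca*q^s)*(a + Ca*q^s) + 3*((b + Ca*q^s)*t)))
          = 3*(q*(1/q))*((b + Ca*q^s)*(a + Ca*q^s) + 3*((b + Ca*q^s)*t))
            + 6*(q*((b + Ca*q^s)*(a + Ca*q^s) + 3*((b + Ca*q^s)*t))) := by ring
        _ = _ := by rw [h0]; ring
    have hqκ : q*((b + Ca*q^s)*(a + Ca*q^s) + 3*((b + Ca*q^s)*t))
        ≤ (b + Ca*q^s)*(a + Ca*q^s) + 3*((b + Ca*q^s)*t) :=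
      mul_le_of_le_one_left hκ0 hq1
    have hXb : X ≤ 10*((b + Ca*q^s)*(a + Ca*q^s) + 3*((b + Ca*q^s)*t)) := by linarith
    -- monomial bounds
    have g1 : 9*(a*b) ≤ 9*(cg*(a*q^(s/2))) := by
      have h8 := mul_le_mul_of_nonneg_left hbsmall ha0.le
      linarith
    have g2 : Ca*q^s*a ≤ Ca*q^(s/2)*a :=
      mul_le_mul_of_nonneg_right (mul_le_mul_of_nonneg_left hqs_le hCa0.le) ha0.le
    have g3 : Ca*q^s*b ≤ Ca*q^(s/2)*b :=
      mul_le_mul_of_nonneg_right (mul_le_mul_of_nonneg_left hqs_le hCa0.le) hb0.le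
    have g4 : (Ca*Ca)*(q^s*q^s) ≤ (Ca*Ca)*q^s :=
      mul_le_mul_of_nonneg_left (mul_le_of_le_one_left hqs0.le hqs_le1) hCaCa
    have g5 : Ca*(q^s*t) ≤ Ca*q^s :=
      mul_le_mul_of_nonneg_left (mul_le_of_le_one_right hqs0.le ht1) hCa0.le
    -- coefficient bounds
    have e1 : 0 ≤ a*b*Real.sqrt q := by positivity
    have c1 : (9*cg+10*Ca)*(a*q^(s/2)) ≤ (40*(cg+Ca+1))*(a*q^(s/2)) := by
      have : 9*cg+10*Ca ≤ 40*(cg+Ca+1) := by linarith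
      exact mul_le_mul_of_nonneg_right this (mul_nonneg ha0.le hqs20.le)
    have c2 : (10*Ca)*(b*q^(s/2)) ≤ (40*(cg+Ca+1))*(b*q^(s/2)) := by
      have : 10*Ca ≤ 40*(cg+Ca+1) := by linarith
      exact mul_le_mul_of_nonneg_right this (mul_nonneg hb0.le hqs20.le)
    have c3 : 30*(b*t) ≤ (40*(cg+Ca+1))*(b*t) := by
      have : (30:ℝ) ≤ 40*(cg+Ca+1) := by linarith
      exact mul_le_mul_of_nonneg_right this (mul_nonneg hb0.le ht0.le)
    have c4 : (10*(Ca*Ca)+30*Ca)*q^s ≤ (40*(Ca*Ca+Ca+1))*q^s := by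
      have : 10*(Ca*Ca)+30*Ca ≤ 40*(Ca*Ca+Ca+1) := by linarith
      exact mul_le_mul_of_nonneg_right this hqs0.le
    linarith [g1, g2, g3, g4, g5, c1, c2, c3, c4, e1, hXb]
end
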